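/- Let D ∈ ℝ^{p×n}, ε > 0, and for fixed u_k ∈ ℝⁿ set z = D u_k and W = diag((z_ℓ² + ε²)^{-1/4}). Then for all u ∈ ℝⁿ, ∑_ℓ √((Du)_ℓ² + ε²) ≤ (1/2)‖W D u‖₂² + c, where c = ∑_ℓ (√(z_ℓ² + ε²)/2 + ε²/(2√(z_ℓ² + ε²))) is a constant independent of u, with equality at u = u_k. -/
import Mathlib


open Real

lemma stmt4_sq (S : ℝ) (hS : 0 < S) (a : ℝ) :
    ((S ^ (-(1 / 4 : ℝ))) * a) ^ 2 = a ^ 2 / Real.sqrt S := by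
  have h1 : (S ^ (-(1 / 4 : ℝ))) ^ 2 = S ^ (-(1 / 2 : ℝ)) := by
    rw [← Real.rpow_natCast (S ^ (-(1 / 4 : ℝ))) 2, ← Real.rpow_mul hS.le]
    norm_num
  have h2 : S ^ (-(1 / 2 : ℝ)) = (Real.sqrt S)⁻¹ := by
    rw [Real.rpow_neg hS.le, ← Real.sqrt_eq_rpow]
  rw [mul_pow, h1, h2]
  ring

lemma stmt4_key (z ε : ℝ) (hε : 0 < ε) (a : ℝ) :
    Real.sqrt (a ^ 2 + ε ^ 2) ≤
      (1 / 2) * ((((z ^ 2 + ε ^ 2) ^ (-(1 / 4 : ℝ))) * a) ^ 2) +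
        (Real.sqrt (z ^ 2 + ε ^ 2) / 2 + ε ^ 2 / (2 * Real.sqrt (z ^ 2 + ε ^ 2))) := by
  have hS : 0 < z ^ 2 + ε ^ 2 := by positivity
  have hA : 0 < a ^ 2 + ε ^ 2 := by positivity
  rw [stmt4_sq _ hS]
  set s := Real.sqrt (z ^ 2 + ε ^ 2) with hsdef
  set r := Real.sqrt (a ^ 2 + ε ^ 2) with hrdef
  have hs : 0 < s := Real.sqrt_pos.mpr hS
  have hr : 0 ≤ r := Real.sqrt_nonneg _
  have hs2 : s ^ 2 = z ^ 2 + ε ^ 2 := Real.sq_sqrt hS.le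
  have hr2 : r ^ 2 = a ^ 2 + ε ^ 2 := Real.sq_sqrt hA.le
  have hRHS : 1 / 2 * (a ^ 2 / s) + (s / 2 + ε ^ 2 / (2 * s)) = (r ^ 2 + s ^ 2) / (2 * s) := by
    rw [hr2]; field_simp; ring
  rw [hRHS, le_div_iff₀ (by positivity)]
  nlinarith [sq_nonneg (r - s)]

lemma stmt4_eq (z ε : ℝ) (hε : 0 < ε) :
    Real.sqrt (z ^ 2 + ε ^ 2) =
      (1 / 2) * ((((z ^ 2 + ε ^ 2) ^ (-(1 / 4 : ℝ))) * z) ^ 2) +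
        (Real.sqrt (z ^ 2 + ε ^ 2) / 2 + ε ^ 2 / (2 * Real.sqrt (z ^ 2 + ε ^ 2))) := by
  have hS : 0 < z ^ 2 + ε ^ 2 := by positivity
  rw [stmt4_sq _ hS]
  set s := Real.sqrt (z ^ 2 + ε ^ 2) with hsdef
  have hs : 0 < s := Real.sqrt_pos.mpr hS
  have hs2 : s ^ 2 = z ^ 2 + ε ^ 2 := Real.sq_sqrt hS.le
  field_simp
  nlinarith

/-- IRLS majorization of the smoothed anisotropic-TV regularizer
`∑ √((Du)ₗ² + ε²)` by `(1/2)‖W D u‖₂² + c`, with equality at the current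
iterate `u_k`, where `W = diag((zₗ²+ε²)^(-1/4))`, `z = D u_k`. -/
theorem stmt4 {p n : ℕ} (D : Matrix (Fin p) (Fin n) ℝ) (ε : ℝ) (hε : 0 < ε)
    (uk : Fin n → ℝ) :
    let z : Fin p → ℝ := D.mulVec uk
    let W : Matrix (Fin p) (Fin p) ℝ :=
      Matrix.diagonal fun ℓ => ((z ℓ) ^ 2 + ε ^ 2) ^ (-(1 / 4 : ℝ))
    let c : ℝ := ∑ ℓ, (Real.sqrt ((z ℓ) ^ 2 + ε ^ 2) / 2 +
      ε ^ 2 / (2 * Real.sqrt ((z ℓ) ^ 2 + ε ^ 2)))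
    (∀ u : Fin n → ℝ,
      (∑ ℓ, Real.sqrt ((D.mulVec u ℓ) ^ 2 + ε ^ 2)) ≤
        (1 / 2) * (∑ ℓ, ((W * D).mulVec u ℓ) ^ 2) + c) ∧
    (∑ ℓ, Real.sqrt ((D.mulVec uk ℓ) ^ 2 + ε ^ 2)) =
        (1 / 2) * (∑ ℓ, ((W * D).mulVec uk ℓ) ^ 2) + c := by
  intro z W c
  have hWD : ∀ (u : Fin n → ℝ) (ℓ : Fin p),
      (W * D).mulVec u ℓ = ((z ℓ) ^ 2 + ε ^ 2) ^ (-(1 / 4 : ℝ)) * (D.mulVec u ℓ) := by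
    intro u ℓ
    rw [← Matrix.mulVec_mulVec]
    simp [W, Matrix.mulVec_diagonal]
  constructor
  · intro u
    rw [Finset.mul_sum, ← Finset.sum_add_distrib]
    apply Finset.sum_le_sum
    intro ℓ _
    rw [hWD]
    exact stmt4_key (z ℓ) ε hε (D.mulVec u ℓ)
  · rw [Finset.mul_sum, ← Finset.sum_add_distrib]
    apply Finset.sum_congr rfl
    intro ℓ _
    rw [hWD]
    exact stmt4_eq (z ℓ) ε hε
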